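/- Let p₁ > 0 and let D, R, I : ℝ → ℝ be differentiable functions satisfying D' = 2I·(p₁D - p₁R), R' = 2I·(p₁R - p₁D), I' = -2p₁(D² + R²) + 4p₁·D·R on ℝ (Case 11 with p₃ = p₁). Assume D(0) ≠ R(0), and set C := (D(0) - R(0))² + 2·I(0)², S := √(C/2), and τ₀ := -(sign I(0))·arcosh(√(1 + 2·I(0)²/(D(0)-R(0))²)). Then for all τ ∈ ℝ: D(τ) = (D(0)+R(0))/2 + (sign(D(0)-R(0))/2)·√C / cosh(4p₁·S·τ + τ₀), R(τ) = (D(0)+R(0))/2 - (sign(D(0)-R(0))/2)·√C / cosh(4p₁·S·τ + τ₀), and I(τ) = -S·tanh(4p₁·S·τ + τ₀). Moreover, the constant solutions of this system are exactly the points with D = R. -/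

import Mathlib

/-- The real inverse hyperbolic cosine. -/
noncomputable def arcosh (x : ℝ) : ℝ := Real.log (x + Real.sqrt (x ^ 2 - 1))

private lemma const_of_deriv_zero (f : ℝ → ℝ) (h : ∀ t, HasDerivAt f 0 t) (τ : ℝ) :
    f τ = f 0 :=
  is_const_of_deriv_eq_zero (fun t => (h t).differentiableAt) (fun t => (h t).deriv) τ 0

set_option maxHeartbeats 1000000

/-- Case 11 (combination of p₁- and p₃-components), balanced case p₃ = p₁:
explicit solution and characterization of the constant solutions. -/
theorem stmt_9 (p₁ : ℝ) (hp₁ : 0 < p₁) (D R I : ℝ → ℝ)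
    (hD : ∀ τ, HasDerivAt D (2 * I τ * (p₁ * D τ - p₁ * R τ)) τ)
    (hR : ∀ τ, HasDerivAt R (2 * I τ * (p₁ * R τ - p₁ * D τ)) τ)
    (hI : ∀ τ, HasDerivAt I (-(2 * p₁ * (D τ ^ 2 + R τ ^ 2)) + 4 * p₁ * D τ * R τ) τ)
    (hne : D 0 ≠ R 0)
    (C S τ₀ : ℝ)
    (hC : C = (D 0 - R 0) ^ 2 + 2 * I 0 ^ 2)
    (hS : S = Real.sqrt (C / 2))
    (hτ₀ : τ₀ = -(Real.sign (I 0)) * arcosh (Real.sqrt (1 + 2 * I 0 ^ 2 / (D 0 - R 0) ^ 2))) :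
    (∀ τ : ℝ,
      D τ = (D 0 + R 0) / 2
              + Real.sign (D 0 - R 0) / 2 * Real.sqrt C / Real.cosh (4 * p₁ * S * τ + τ₀) ∧
      R τ = (D 0 + R 0) / 2
              - Real.sign (D 0 - R 0) / 2 * Real.sqrt C / Real.cosh (4 * p₁ * S * τ + τ₀) ∧
      I τ = -S * Real.tanh (4 * p₁ * S * τ + τ₀)) ∧
    -- the constant solutions of the system are exactly the points with D = R
    (∀ x y z : ℝ,
      ((∀ τ : ℝ, HasDerivAt (fun _ : ℝ => x) (2 * z * (p₁ * x - p₁ * y)) τ) ∧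
       (∀ τ : ℝ, HasDerivAt (fun _ : ℝ => y) (2 * z * (p₁ * y - p₁ * x)) τ) ∧
       (∀ τ : ℝ, HasDerivAt (fun _ : ℝ => z)
          (-(2 * p₁ * (x ^ 2 + y ^ 2)) + 4 * p₁ * x * y) τ)) ↔ x = y) := by
  constructor
  · -- main part
    have hu0 : D 0 - R 0 ≠ 0 := sub_ne_zero.2 hne
    have hCpos : 0 < C := by
      have h1 : 0 < (D 0 - R 0) ^ 2 := by positivity
      nlinarith [sq_nonneg (I 0)]
    have hSpos : 0 < S := by
      rw [hS]; exact Real.sqrt_pos.2 (by linarith)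
    have hS2 : 2 * S ^ 2 = C := by
      rw [hS, Real.sq_sqrt (by linarith : (0:ℝ) ≤ C / 2)]; ring
    -- derivative of u = D - R
    have hu : ∀ τ, HasDerivAt (fun t => D t - R t) (4 * p₁ * I τ * (D τ - R τ)) τ := by
      intro τ
      have h1 := (hD τ).sub (hR τ)
      exact h1.congr_deriv (by ring)
    have hI' : ∀ τ, HasDerivAt I (-(2 * p₁) * (D τ - R τ) ^ 2) τ := by
      intro τ
      convert hI τ using 1; ring
    -- D + R is constant
    have hv : ∀ τ, D τ + R τ = D 0 + R 0 := by
      have h0 : ∀ t, HasDerivAt (fun t => D t + R t) 0 t := by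
        intro t
        have h1 := (hD t).add (hR t)
        exact h1.congr_deriv (by ring)
      exact const_of_deriv_zero _ h0
    -- energy conservation
    have hE : ∀ τ, (D τ - R τ) ^ 2 + 2 * I τ ^ 2 = C := by
      have h0 : ∀ t, HasDerivAt (fun t => (D t - R t) ^ 2 + 2 * I t ^ 2) 0 t := by
        intro t
        have h1 := ((hu t).pow 2).add (((hI' t).pow 2).const_mul 2)
        exact h1.congr_deriv (by ring)
      intro τ
      have h2 := const_of_deriv_zero _ h0 τ
      rw [h2, hC]
    -- u never vanishes, same sign as u 0
    have hIcont : Continuous I := by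
      have : Differentiable ℝ I := fun t => (hI t).differentiableAt
      exact this.continuous
    set A : ℝ → ℝ := fun τ => ∫ t in (0:ℝ)..τ, 4 * p₁ * I t with hAdef
    have hA' : ∀ τ, HasDerivAt A (4 * p₁ * I τ) τ := by
      intro τ
      exact (((continuous_const.mul hIcont).integral_hasStrictDerivAt 0 τ)).hasDerivAt
    have hA0 : A 0 = 0 := intervalIntegral.integral_same
    have huexp : ∀ τ, D τ - R τ = (D 0 - R 0) * Real.exp (A τ) := by
      have h0 : ∀ t, HasDerivAt (fun t => (D t - R t) * Real.exp (-A t)) 0 t := by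
        intro t
        have h1 := (hu t).mul ((hA' t).neg.exp)
        exact h1.congr_deriv (by ring)
      intro τ
      have h2 := const_of_deriv_zero _ h0 τ
      simp only [hA0, neg_zero, Real.exp_zero, mul_one] at h2
      have h3 := congrArg (· * Real.exp (A τ)) h2
      simp only [mul_assoc, ← Real.exp_add, neg_add_cancel, Real.exp_zero, mul_one] at h3
      exact h3
    have hIlt : ∀ τ, I τ ^ 2 < S ^ 2 := by
      intro τ
      have h1 : (D τ - R τ) ≠ 0 := by
        rw [huexp τ]; positivity
      have h2 : 0 < (D τ - R τ) ^ 2 := by positivity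
      nlinarith [hE τ]
    have hSmI : ∀ τ, 0 < S - I τ := by
      intro τ; nlinarith [hIlt τ]
    have hSpI : ∀ τ, 0 < S + I τ := by
      intro τ; nlinarith [hIlt τ]
    have hu2 : ∀ τ, (D τ - R τ) ^ 2 = 2 * ((S - I τ) * (S + I τ)) := by
      intro τ; nlinarith [hE τ]
    -- the phase function
    set θ : ℝ → ℝ := fun τ => (Real.log (S - I τ) - Real.log (S + I τ)) / 2 with hθdef
    have hθ' : ∀ τ, HasDerivAt θ (4 * p₁ * S) τ := by
      intro τ
      have h1 : HasDerivAt (fun t => S - I t) (0 - -(2 * p₁) * (D τ - R τ) ^ 2) τ :=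
        (hasDerivAt_const τ S).sub (hI' τ)
      have h2 : HasDerivAt (fun t => S + I t) (0 + -(2 * p₁) * (D τ - R τ) ^ 2) τ :=
        (hasDerivAt_const τ S).add (hI' τ)
      have h3 := ((h1.log (hSmI τ).ne').sub (h2.log (hSpI τ).ne')).div_const 2
      refine h3.congr_deriv (Eq.symm ?_)
      rw [hu2 τ]
      field_simp [(hSmI τ).ne', (hSpI τ).ne']
      ring
    have hθlin : ∀ τ, θ τ = 4 * p₁ * S * τ + θ 0 := by
      have h0 : ∀ t, HasDerivAt (fun t => θ t - 4 * p₁ * S * t) 0 t := by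
        intro t
        have h1 := (hθ' t).sub ((hasDerivAt_id t).const_mul (4 * p₁ * S))
        exact h1.congr_deriv (by ring)
      intro τ
      have h2 := const_of_deriv_zero _ h0 τ
      simp only [mul_zero, sub_zero] at h2
      linarith
    -- exponentials of θ
    have hexpθ : ∀ τ, Real.exp (θ τ) = Real.sqrt (S - I τ) / Real.sqrt (S + I τ) := by
      intro τ
      have ha := hSmI τ
      have hb := hSpI τ
      have e1 : Real.exp (Real.log (S - I τ) / 2) = Real.sqrt (S - I τ) := by
        rw [← Real.log_sqrt ha.le, Real.exp_log (Real.sqrt_pos.2 ha)]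
      have e2 : Real.exp (Real.log (S + I τ) / 2) = Real.sqrt (S + I τ) := by
        rw [← Real.log_sqrt hb.le, Real.exp_log (Real.sqrt_pos.2 hb)]
      have : θ τ = Real.log (S - I τ) / 2 - Real.log (S + I τ) / 2 := by
        rw [hθdef]; ring
      rw [this, Real.exp_sub, e1, e2]
    have hexpnegθ : ∀ τ, Real.exp (-θ τ) = Real.sqrt (S + I τ) / Real.sqrt (S - I τ) := by
      intro τ
      rw [Real.exp_neg, hexpθ τ, inv_div]
    -- tanh θ = -I/S
    have htanh : ∀ τ, Real.tanh (θ τ) = -I τ / S := by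
      intro τ
      have ha := hSmI τ
      have hb := hSpI τ
      have h1 : Real.sqrt (S - I τ) * Real.sqrt (S - I τ) = S - I τ :=
        Real.mul_self_sqrt ha.le
      have h2 : Real.sqrt (S + I τ) * Real.sqrt (S + I τ) = S + I τ :=
        Real.mul_self_sqrt hb.le
      have ha' : Real.sqrt (S - I τ) ≠ 0 := (Real.sqrt_pos.2 ha).ne'
      have hb' : Real.sqrt (S + I τ) ≠ 0 := (Real.sqrt_pos.2 hb).ne'
      rw [Real.tanh_eq_sinh_div_cosh, Real.sinh_eq, Real.cosh_eq, hexpθ τ, hexpnegθ τ]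
      field_simp
      nlinarith [h1, h2, sq_nonneg (Real.sqrt (S - I τ)), sq_nonneg (Real.sqrt (S + I τ))]
    -- cosh θ
    have hcosh : ∀ τ, Real.cosh (θ τ)
        = S / (Real.sqrt (S - I τ) * Real.sqrt (S + I τ)) := by
      intro τ
      have ha := hSmI τ
      have hb := hSpI τ
      have h1 : Real.sqrt (S - I τ) * Real.sqrt (S - I τ) = S - I τ :=
        Real.mul_self_sqrt ha.le
      have h2 : Real.sqrt (S + I τ) * Real.sqrt (S + I τ) = S + I τ :=
        Real.mul_self_sqrt hb.le
      have ha' : Real.sqrt (S - I τ) ≠ 0 := (Real.sqrt_pos.2 ha).ne'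
      have hb' : Real.sqrt (S + I τ) ≠ 0 := (Real.sqrt_pos.2 hb).ne'
      rw [Real.cosh_eq, hexpθ τ, hexpnegθ τ]
      field_simp
      nlinarith [h1, h2]
    have hcoshpos : ∀ τ, 0 < Real.cosh (θ τ) := fun τ => Real.cosh_pos _
    -- u τ = sign(u0) √C / cosh(θ τ)
    have hk2 : ∀ τ, (Real.sqrt C / Real.cosh (θ τ)) ^ 2 = (D τ - R τ) ^ 2 := by
      intro τ
      have ha := hSmI τ
      have hb := hSpI τ
      rw [hcosh τ, div_div_eq_mul_div, div_pow, mul_pow, Real.sq_sqrt hCpos.le,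
        mul_pow, Real.sq_sqrt ha.le, Real.sq_sqrt hb.le, hu2 τ]
      rw [← hS2]
      field_simp
    have huval : ∀ τ, D τ - R τ
        = Real.sign (D 0 - R 0) * (Real.sqrt C / Real.cosh (θ τ)) := by
      intro τ
      have hkpos : 0 < Real.sqrt C / Real.cosh (θ τ) :=
        div_pos (Real.sqrt_pos.2 hCpos) (hcoshpos τ)
      rcases lt_or_gt_of_ne hu0 with h | h
      · rw [Real.sign_of_neg h]
        have hun : D τ - R τ < 0 := by
          rw [huexp τ]
          exact mul_neg_of_neg_of_pos h (Real.exp_pos _)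
        nlinarith [hk2 τ]
      · rw [Real.sign_of_pos h]
        have hun : 0 < D τ - R τ := by
          rw [huexp τ]
          exact mul_pos h (Real.exp_pos _)
        nlinarith [hk2 τ]
    -- θ 0 = τ₀
    have hθ0 : θ 0 = τ₀ := by
      have ha := hSmI 0
      have hb := hSpI 0
      have hab : 0 < (S - I 0) * (S + I 0) := mul_pos ha hb
      have hx : 1 + 2 * I 0 ^ 2 / (D 0 - R 0) ^ 2 = S ^ 2 / ((S - I 0) * (S + I 0)) := by
        rw [hu2 0]
        field_simp
        nlinarith [hS2]
      have hxv : Real.sqrt (1 + 2 * I 0 ^ 2 / (D 0 - R 0) ^ 2)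
          = S / Real.sqrt ((S - I 0) * (S + I 0)) := by
        rw [hx, Real.sqrt_div (sq_nonneg S), Real.sqrt_sq hSpos.le]
      have hsq : Real.sqrt (1 + 2 * I 0 ^ 2 / (D 0 - R 0) ^ 2) ^ 2 - 1
          = I 0 ^ 2 / ((S - I 0) * (S + I 0)) := by
        rw [hxv, div_pow, Real.sq_sqrt hab.le]
        field_simp
        ring
      have hsqv : Real.sqrt (Real.sqrt (1 + 2 * I 0 ^ 2 / (D 0 - R 0) ^ 2) ^ 2 - 1)
          = |I 0| / Real.sqrt ((S - I 0) * (S + I 0)) := by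
        rw [hsq, Real.sqrt_div (sq_nonneg (I 0)), Real.sqrt_sq_eq_abs]
      have harc : arcosh (Real.sqrt (1 + 2 * I 0 ^ 2 / (D 0 - R 0) ^ 2))
          = Real.log (S + |I 0|) - (Real.log (S - I 0) + Real.log (S + I 0)) / 2 := by
        rw [arcosh, hsqv, hxv, ← add_div,
          Real.log_div (by positivity) (Real.sqrt_pos.2 hab).ne', Real.log_sqrt hab.le,
          Real.log_mul ha.ne' hb.ne']
      rcases lt_trichotomy (I 0) 0 with h | h | h
      · rw [hτ₀, Real.sign_of_neg h, harc, abs_of_neg h, hθdef]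
        have : S + -I 0 = S - I 0 := by ring
        rw [this]
        ring
      · rw [hτ₀, h, Real.sign_zero, hθdef]
        simp [h]
      · rw [hτ₀, Real.sign_of_pos h, harc, abs_of_pos h, hθdef]
        ring
    -- conclude
    intro τ
    have hφ : 4 * p₁ * S * τ + τ₀ = θ τ := by rw [hθlin τ, hθ0]
    have hIval : I τ = -S * Real.tanh (4 * p₁ * S * τ + τ₀) := by
      rw [hφ, htanh τ]
      field_simp
    have huv2 : Real.sign (D 0 - R 0) / 2 * Real.sqrt C / Real.cosh (4 * p₁ * S * τ + τ₀)
        = (D τ - R τ) / 2 := by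
      rw [hφ, huval τ]; ring
    have hvτ := hv τ
    exact ⟨by linarith, by linarith, hIval⟩
  · -- constant solutions
    intro x y z
    constructor
    · rintro ⟨-, -, h3⟩
      have h4 : -(2 * p₁ * (x ^ 2 + y ^ 2)) + 4 * p₁ * x * y = 0 :=
        (h3 0).unique (hasDerivAt_const (0:ℝ) z)
      have h5 : 2 * p₁ * (x - y) ^ 2 = 0 := by linear_combination -h4
      rcases mul_eq_zero.mp h5 with h6 | h6
      · linarith
      · have h7 := sq_eq_zero_iff.mp h6
        linarith
    · rintro rfl
      refine ⟨fun τ => ?_, fun τ => ?_, fun τ => ?_⟩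
      · have h : 2 * z * (p₁ * x - p₁ * x) = 0 := by ring
        rw [h]; exact hasDerivAt_const τ x
      · have h : 2 * z * (p₁ * x - p₁ * x) = 0 := by ring
        rw [h]; exact hasDerivAt_const τ x
      · have h : -(2 * p₁ * (x ^ 2 + x ^ 2)) + 4 * p₁ * x * x = 0 := by ring
        rw [h]; exact hasDerivAt_const τ z
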